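/- Let f ∈ F_q[x] be a permutation polynomial of F_q with Carlitz rank Crk(f) = 2. Then there exist elements a_0, a_1, a_2, a_3 ∈ F_q with a_0 ≠ 0 and a_2 ≠ 0 such that f(x) ≡ a_2^{−1} · Σ_{i=1}^{q−2} x^i (−a_0)^i [ (a_1 − i a_2^{−1})(a_1 + a_2^{−1})^{q−2−i} − a_1^{q−1−i} ] + c (mod x^q − x), where c = a_3 + a_2^{−1} [ a_1 (a_1 + a_2^{−1})^{q−2} + 1 − a_1^{q−1} ]. -/

import Mathlib

open Polynomial

noncomputable def carlitzChain {F : Type*} [Field F] (q : ℕ) (a : ℕ → F) : ℕ → F[X]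
  | 0 => C (a 0) * X + C (a 1)
  | n + 1 => carlitzChain q a n ^ (q - 2) + C (a (n + 2))

/-- `f` is congruent mod `X^q - X` to a Carlitz chain of length `n`. -/
def IsCarlitzRep {F : Type*} [Field F] (q : ℕ) (f : F[X]) (n : ℕ) : Prop :=
  ∃ a : ℕ → F, a 0 ≠ 0 ∧ (∀ i, 2 ≤ i → i ≤ n → a i ≠ 0) ∧
    (X ^ q - X : F[X]) ∣ f - carlitzChain q a n

/-- The Carlitz rank of a permutation polynomial. -/
noncomputable def carlitzRank {F : Type*} [Field F] (q : ℕ) (f : F[X]) : ℕ :=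
  sInf {n | IsCarlitzRep q f n}

/-- The weight: number of nonzero coefficients of the reduction of `f` mod `X^q - X`. -/
noncomputable def polyWeight {F : Type*} [Field F] (q : ℕ) (f : F[X]) : ℕ :=
  (f %ₘ (X ^ q - X)).support.card

/-- `ν_p` from the paper. -/
noncomputable def nuP (p : ℕ) [Fact p.Prime] : ℕ :=
  Finset.sup (Finset.univ.erase (1 : ZMod p)) fun γ =>
    ((Finset.Icc 1 (p - 2)).filter
      (fun i : ℕ => γ ^ (i + 1) = (i : ZMod p) * (1 - γ) + 1)).card


section Helpers
open Finset

variable {F : Type*} [Field F] [Fintype F]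

lemma myDvdOfEval (g : F[X]) (h : ∀ x : F, g.eval x = 0) :
    (X ^ Fintype.card F - X : F[X]) ∣ g := by
  have hq : 1 < Fintype.card F := Fintype.one_lt_card
  have hm : (X ^ Fintype.card F - X : F[X]).Monic :=
    monic_X_pow_sub (by rw [degree_X]; exact_mod_cast hq)
  rw [← modByMonic_eq_zero_iff_dvd hm]
  by_cases h0 : g %ₘ (X ^ Fintype.card F - X) = 0
  · exact h0
  apply Polynomial.eq_zero_of_natDegree_lt_card_of_eval_eq_zero _ Function.injective_id
  · intro x
    have hdiv := modByMonic_add_div g (X ^ Fintype.card F - X)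
    have := congrArg (eval x) hdiv
    simp only [eval_add, eval_mul, eval_sub, eval_pow, eval_X, FiniteField.pow_card,
      sub_self, zero_mul, add_zero] at this
    rw [id_eq, this]; exact h x
  · have h1 : (g %ₘ (X ^ Fintype.card F - X)).natDegree < (X ^ Fintype.card F - X : F[X]).natDegree :=
      natDegree_modByMonic_lt g hm (by
        intro hEq
        have := congrArg natDegree hEq
        rw [natDegree_one] at this
        have hdeg : (X ^ Fintype.card F - X : F[X]).natDegree = Fintype.card F := by
          rw [natDegree_sub_eq_left_of_natDegree_lt] <;>
            simp [natDegree_X_pow, natDegree_X]; omega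
        omega)
    have hdeg : (X ^ Fintype.card F - X : F[X]).natDegree = Fintype.card F := by
      rw [natDegree_sub_eq_left_of_natDegree_lt] <;>
        simp [natDegree_X_pow, natDegree_X]; omega
    simpa [hdeg] using h1

lemma myEvalEqOfDvd {g h : F[X]} (hd : (X ^ Fintype.card F - X : F[X]) ∣ g - h) (x : F) :
    g.eval x = h.eval x := by
  obtain ⟨k, hk⟩ := hd
  have := congrArg (eval x) hk
  simp only [eval_sub, eval_mul, eval_pow, eval_X, FiniteField.pow_card, sub_self,
    zero_mul] at this
  exact sub_eq_zero.mp this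

lemma myPowSubTwo (hq : 3 ≤ Fintype.card F) (v : F) : v ^ (Fintype.card F - 2) = v⁻¹ := by
  rcases eq_or_ne v 0 with rfl | hv
  · rw [inv_zero, zero_pow (by omega)]
  · have h1 := FiniteField.pow_card_sub_one_eq_one v hv
    have e : Fintype.card F - 1 = (Fintype.card F - 2) + 1 := by omega
    rw [e, pow_succ] at h1
    exact eq_inv_of_mul_eq_one_left h1

lemma myNegOnePowSubOne (hq : 3 ≤ Fintype.card F) : (-1 : F) ^ (Fintype.card F - 1) = 1 :=
  FiniteField.pow_card_sub_one_eq_one _ (neg_ne_zero.mpr one_ne_zero)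

lemma myNegOnePowSubTwo (hq : 3 ≤ Fintype.card F) : (-1 : F) ^ (Fintype.card F - 2) = -1 := by
  rw [myPowSubTwo hq, inv_neg, inv_one]

lemma myChooseOne : ∀ k : ℕ, k ≤ Fintype.card F - 1 →
    (((Fintype.card F - 1).choose k : ℕ) : F) = (-1) ^ k := by
  obtain ⟨p, hp⟩ := CharP.exists F
  haveI := hp
  have hprime : p.Prime := CharP.char_is_prime F p
  obtain ⟨n, -, hcard⟩ := FiniteField.card F p
  have hqpos : 0 < Fintype.card F := Fintype.card_pos
  intro k
  induction k with
  | zero => intro _; simp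
  | succ k ih =>
    intro hk
    have pascal := Nat.choose_succ_succ (Fintype.card F - 1) k
    simp only [Nat.succ_eq_add_one] at pascal
    have h1 : Fintype.card F - 1 + 1 = Fintype.card F := by omega
    rw [h1] at pascal
    have hne : k + 1 ≠ Fintype.card F := by omega
    have hdvd : p ∣ (Fintype.card F).choose (k + 1) := by
      rw [hcard]; exact hprime.dvd_choose_pow (Nat.succ_ne_zero k) (hcard ▸ hne)
    have hcast : (((Fintype.card F).choose (k + 1) : ℕ) : F) = 0 :=
      (CharP.cast_eq_zero_iff F p _).mpr hdvd
    have hps := congrArg (fun m : ℕ => (m : F)) pascal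
    push_cast at hps
    rw [hcast, ih (by omega)] at hps
    linear_combination -hps

lemma myChooseTwo : ∀ k : ℕ, k ≤ Fintype.card F - 2 → 3 ≤ Fintype.card F →
    (((Fintype.card F - 2).choose k : ℕ) : F) = (-1) ^ k * (k + 1) := by
  intro k
  induction k with
  | zero => intro _ _; simp
  | succ k ih =>
    intro hk hq
    have pascal := Nat.choose_succ_succ (Fintype.card F - 2) k
    simp only [Nat.succ_eq_add_one] at pascal
    have h1 : Fintype.card F - 2 + 1 = Fintype.card F - 1 := by omega
    rw [h1] at pascal
    have hps := congrArg (fun m : ℕ => (m : F)) pascal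
    push_cast at hps
    rw [myChooseOne (k + 1) (by omega), ih (by omega) hq] at hps
    push_cast
    linear_combination -hps

lemma myKeyE (hq : 3 ≤ Fintype.card F) (a2 : F) (h2 : a2 ≠ 0) (u : F) :
    (u ^ (Fintype.card F - 2) + a2) ^ (Fintype.card F - 2)
      = a2⁻¹ + a2⁻¹ * (-(a2⁻¹ * (u + a2⁻¹) ^ (Fintype.card F - 2))
          + (u + a2⁻¹) ^ (Fintype.card F - 1) - u ^ (Fintype.card F - 1)) := by
  have hb : (a2⁻¹ : F) ≠ 0 := inv_ne_zero h2
  rcases eq_or_ne u 0 with rfl | hu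
  · rw [zero_pow (show Fintype.card F - 2 ≠ 0 by omega),
      zero_pow (show Fintype.card F - 1 ≠ 0 by omega), zero_add, zero_add,
      myPowSubTwo hq, myPowSubTwo hq, FiniteField.pow_card_sub_one_eq_one _ hb,
      inv_inv]
    field_simp
    ring
  rcases eq_or_ne (u + a2⁻¹) 0 with h0 | hub
  · rw [h0, zero_pow (show Fintype.card F - 2 ≠ 0 by omega),
      zero_pow (show Fintype.card F - 1 ≠ 0 by omega),
      FiniteField.pow_card_sub_one_eq_one u hu, myPowSubTwo hq u]
    have hu' : u = -a2⁻¹ := by linear_combination h0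
    rw [hu', inv_neg, inv_inv, neg_add_cancel,
      zero_pow (show Fintype.card F - 2 ≠ 0 by omega)]
    ring
  · rw [myPowSubTwo hq u, myPowSubTwo hq (u + a2⁻¹),
      FiniteField.pow_card_sub_one_eq_one _ hu, FiniteField.pow_card_sub_one_eq_one _ hub,
      myPowSubTwo hq (u⁻¹ + a2)]
    have hden : u⁻¹ + a2 ≠ 0 := by
      intro h
      apply hub
      have h' : u⁻¹ = -a2 := by linear_combination h
      rw [← inv_inv u, h']
      field_simp
      ring
    have h1 : 1 + u * a2 ≠ 0 := by
      intro h
      apply hub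
      have e : u + a2⁻¹ = a2⁻¹ * (1 + u * a2) := by field_simp; ring
      rw [e, h, mul_zero]
    have h2' : u * a2 ^ 2 + a2 ≠ 0 := by
      intro h
      apply hub
      have e : u + a2⁻¹ = a2⁻¹ * a2⁻¹ * (u * a2 ^ 2 + a2) := by field_simp
      rw [e, h, mul_zero]
    field_simp [h1, h2']
    have h1' : 1 + a2 * u ≠ 0 := by rwa [mul_comm a2 u]
    have h3' : a2 * (u * a2 + 1) ≠ 0 := mul_ne_zero h2 (by rwa [add_comm] at h1)
    linear_combination inv_mul_cancel₀ h1

lemma myStar (hq : 3 ≤ Fintype.card F) (a1 b : F) :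
    (∑ i ∈ Finset.range (Fintype.card F - 1),
        C ((a1 - (i : F) * b) * (a1 + b) ^ (Fintype.card F - 2 - i)
          - a1 ^ (Fintype.card F - 1 - i)) * X ^ i)
      = C b * (X - C (a1 + b)) ^ (Fintype.card F - 2)
        + (X - C (a1 + b)) ^ (Fintype.card F - 1)
        - (X - C a1) ^ (Fintype.card F - 1) := by
  have hsub : ∀ r : F, (X - C r : F[X]) = X + C (-r) := by
    intro r; rw [C_neg, sub_eq_add_neg]
  ext k
  rw [finset_sum_coeff]
  simp only [coeff_C_mul, coeff_X_pow, mul_ite, mul_one, mul_zero]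
  rw [Finset.sum_ite_eq (Finset.range (Fintype.card F - 1)) k]
  rw [coeff_sub, coeff_add, coeff_C_mul, hsub (a1 + b), hsub a1,
    coeff_X_add_C_pow, coeff_X_add_C_pow, coeff_X_add_C_pow]
  by_cases hk : k < Fintype.card F - 1
  · rw [if_pos (Finset.mem_range.mpr hk)]
    rw [myChooseTwo k (by omega) hq, myChooseOne k (by omega)]
    have e1 : Fintype.card F - 1 - k = (Fintype.card F - 2 - k) + 1 := by omega
    rw [e1]
    have hmk : (-1 : F) ^ (Fintype.card F - 2 - k) * (-1) ^ k = -1 := by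
      rw [← pow_add, show Fintype.card F - 2 - k + k = Fintype.card F - 2 by omega]
      exact myNegOnePowSubTwo hq
    rw [neg_pow (a1 + b), neg_pow (a1 + b), neg_pow a1]
    set m := Fintype.card F - 2 - k with hm
    linear_combination (-(b * (a1 + b) ^ m * ((k : F) + 1)) + (a1 + b) ^ (m + 1) - a1 ^ (m + 1)) * hmk
  · rw [if_neg (by simpa using hk)]
    have h1 : (Fintype.card F - 2).choose k = 0 := Nat.choose_eq_zero_of_lt (by omega)
    have h2 : Fintype.card F - 1 - k = 0 := by omega
    rw [h1, h2]
    simp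

end Helpers

/-- **Lemma.** If `f` is a permutation polynomial of `F_q` with Carlitz rank 2, then there
exist `a₀, a₁, a₂, a₃ ∈ F_q` with `a₀ ≠ 0`, `a₂ ≠ 0` such that
`f(x) ≡ a₂⁻¹ ∑_{i=1}^{q-2} x^i (-a₀)^i [(a₁ - i a₂⁻¹)(a₁ + a₂⁻¹)^{q-2-i} - a₁^{q-1-i}] + c`
`(mod x^q - x)`, where `c = a₃ + a₂⁻¹[a₁(a₁ + a₂⁻¹)^{q-2} + 1 - a₁^{q-1}]`. -/
theorem exists_explicit_form_of_carlitzRank_two {F : Type*} [Field F] [Fintype F] (f : F[X])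
    (hperm : Function.Bijective fun x : F => f.eval x)
    (hrank : carlitzRank (Fintype.card F) f = 2) :
    ∃ a₀ a₁ a₂ a₃ : F, a₀ ≠ 0 ∧ a₂ ≠ 0 ∧
      (X ^ Fintype.card F - X : F[X]) ∣
        f - (C a₂⁻¹ * (∑ i ∈ Finset.Icc 1 (Fintype.card F - 2),
              C ((-a₀) ^ i * ((a₁ - (i : F) * a₂⁻¹) * (a₁ + a₂⁻¹) ^ (Fintype.card F - 2 - i)
                - a₁ ^ (Fintype.card F - 1 - i))) * X ^ i)
          + C (a₃ + a₂⁻¹ * (a₁ * (a₁ + a₂⁻¹) ^ (Fintype.card F - 2) + 1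
                - a₁ ^ (Fintype.card F - 1)))) := by
  classical
  have hmem : IsCarlitzRep (Fintype.card F) f 2 := by
    by_cases hne : {n | IsCarlitzRep (Fintype.card F) f n}.Nonempty
    · have h := Nat.sInf_mem hne
      rw [carlitzRank] at hrank
      rwa [hrank] at h
    · rw [Set.not_nonempty_iff_eq_empty] at hne
      rw [carlitzRank, hne, Nat.sInf_empty] at hrank
      exact absurd hrank (by norm_num)
  obtain ⟨a, ha0, hai, hdvd⟩ := hmem
  have ha2 : a 2 ≠ 0 := hai 2 le_rfl le_rfl
  have hq2 : 2 ≤ Fintype.card F := Fintype.one_lt_card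
  have hc2 : carlitzChain (Fintype.card F) a 2
      = (carlitzChain (Fintype.card F) a 1) ^ (Fintype.card F - 2) + C (a 3) := rfl
  have hc1 : carlitzChain (Fintype.card F) a 1
      = (carlitzChain (Fintype.card F) a 0) ^ (Fintype.card F - 2) + C (a 2) := rfl
  have hc0 : carlitzChain (Fintype.card F) a 0 = C (a 0) * X + C (a 1) := rfl
  have hq : 3 ≤ Fintype.card F := by
    by_contra hlt
    have hq2' : Fintype.card F - 2 = 0 := by omega
    have hchain : carlitzChain (Fintype.card F) a 2 = 1 + C (a 3) := by
      rw [hc2, hq2', pow_zero]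
    have he := fun x => myEvalEqOfDvd hdvd x
    have h01 : f.eval 0 = f.eval 1 := by
      rw [he 0, he 1, hchain]; simp
    have := hperm.injective h01
    exact one_ne_zero this.symm
  refine ⟨a 0, a 1, a 2, a 3, ha0, ha2, ?_⟩
  have key : ∀ x : F, (carlitzChain (Fintype.card F) a 2).eval x =
      (C (a 2)⁻¹ * (∑ i ∈ Finset.Icc 1 (Fintype.card F - 2),
              C ((-(a 0)) ^ i * ((a 1 - (i : F) * (a 2)⁻¹) * (a 1 + (a 2)⁻¹) ^ (Fintype.card F - 2 - i)
                - (a 1) ^ (Fintype.card F - 1 - i))) * X ^ i)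
          + C (a 3 + (a 2)⁻¹ * (a 1 * (a 1 + (a 2)⁻¹) ^ (Fintype.card F - 2) + 1
                - (a 1) ^ (Fintype.card F - 1)))).eval x := by
    intro x
    have hchain : (carlitzChain (Fintype.card F) a 2).eval x
        = (((a 0) * x + a 1) ^ (Fintype.card F - 2) + a 2) ^ (Fintype.card F - 2) + a 3 := by
      rw [hc2, hc1, hc0]; simp
    rw [hchain]
    simp only [eval_add, eval_mul, eval_C, eval_finset_sum, eval_pow, eval_X]
    have hsum : (∑ i ∈ Finset.Icc 1 (Fintype.card F - 2),
          ((-(a 0)) ^ i * ((a 1 - (i : F) * (a 2)⁻¹) * (a 1 + (a 2)⁻¹) ^ (Fintype.card F - 2 - i)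
            - (a 1) ^ (Fintype.card F - 1 - i))) * x ^ i)
        = (∑ i ∈ Finset.range (Fintype.card F - 1),
            ((a 1 - (i : F) * (a 2)⁻¹) * (a 1 + (a 2)⁻¹) ^ (Fintype.card F - 2 - i)
              - (a 1) ^ (Fintype.card F - 1 - i)) * (-(a 0 * x)) ^ i)
          - (a 1 * (a 1 + (a 2)⁻¹) ^ (Fintype.card F - 2) - (a 1) ^ (Fintype.card F - 1)) := by
      rw [Finset.range_eq_Ico, Finset.sum_eq_sum_Ico_succ_bot (by omega : 0 < Fintype.card F - 1)]
      simp only [pow_zero, mul_one, Nat.cast_zero, zero_mul, sub_zero, Nat.sub_zero]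
      rw [add_sub_cancel_left]
      rw [show Finset.Ico 1 (Fintype.card F - 1) = Finset.Icc 1 (Fintype.card F - 2) by
        rw [show Fintype.card F - 1 = (Fintype.card F - 2) + 1 by omega, Finset.Ico_add_one_right_eq_Icc]]
      refine Finset.sum_congr rfl fun i _ => ?_
      rw [show -(a 0 * x) = (-(a 0)) * x by ring, mul_pow]
      ring
    rw [hsum]
    have hS : (∑ i ∈ Finset.range (Fintype.card F - 1),
            ((a 1 - (i : F) * (a 2)⁻¹) * (a 1 + (a 2)⁻¹) ^ (Fintype.card F - 2 - i)
              - (a 1) ^ (Fintype.card F - 1 - i)) * (-(a 0 * x)) ^ i)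
        = -((a 2)⁻¹ * ((a 0 * x + a 1) + (a 2)⁻¹) ^ (Fintype.card F - 2))
          + ((a 0 * x + a 1) + (a 2)⁻¹) ^ (Fintype.card F - 1)
          - (a 0 * x + a 1) ^ (Fintype.card F - 1) := by
      have hG := congrArg (eval (-(a 0 * x))) (myStar hq (a 1) (a 2)⁻¹)
      simp only [eval_finset_sum, eval_mul, eval_C, eval_pow, eval_X, eval_add, eval_sub] at hG
      rw [hG]
      rw [show -(a 0 * x) - (a 1 + (a 2)⁻¹) = -((a 0 * x + a 1) + (a 2)⁻¹) by ring]
      rw [show -(a 0 * x) - a 1 = -(a 0 * x + a 1) by ring]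
      rw [neg_pow (a 0 * x + a 1 + (a 2)⁻¹) (Fintype.card F - 2),
        neg_pow (a 0 * x + a 1 + (a 2)⁻¹) (Fintype.card F - 1),
        neg_pow (a 0 * x + a 1) (Fintype.card F - 1),
        myNegOnePowSubOne hq, myNegOnePowSubTwo hq]
      ring
    rw [hS]
    linear_combination myKeyE hq (a 2) ha2 (a 0 * x + a 1)
  have hsplit : f - (C (a 2)⁻¹ * (∑ i ∈ Finset.Icc 1 (Fintype.card F - 2),
              C ((-(a 0)) ^ i * ((a 1 - (i : F) * (a 2)⁻¹) * (a 1 + (a 2)⁻¹) ^ (Fintype.card F - 2 - i)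
                - (a 1) ^ (Fintype.card F - 1 - i))) * X ^ i)
          + C (a 3 + (a 2)⁻¹ * (a 1 * (a 1 + (a 2)⁻¹) ^ (Fintype.card F - 2) + 1
                - (a 1) ^ (Fintype.card F - 1))))
      = (f - carlitzChain (Fintype.card F) a 2)
        + (carlitzChain (Fintype.card F) a 2 - (C (a 2)⁻¹ * (∑ i ∈ Finset.Icc 1 (Fintype.card F - 2),
              C ((-(a 0)) ^ i * ((a 1 - (i : F) * (a 2)⁻¹) * (a 1 + (a 2)⁻¹) ^ (Fintype.card F - 2 - i)
                - (a 1) ^ (Fintype.card F - 1 - i))) * X ^ i)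
          + C (a 3 + (a 2)⁻¹ * (a 1 * (a 1 + (a 2)⁻¹) ^ (Fintype.card F - 2) + 1
                - (a 1) ^ (Fintype.card F - 1))))) := by ring
  rw [hsplit]
  refine dvd_add hdvd (myDvdOfEval _ fun x => ?_)
  rw [eval_sub, key x, sub_self]
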